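/- arXiv:2212.09542 — 2 statements merged into one kernel-verified Lean document; each statement's English description precedes it below -/
import Mathlib

section
/- Let μ : [0,1) → [0,∞) be nondecreasing and square-integrable, let j ∈ ℕ, and let μ^(j) be the dyadic average of μ at scale j. Then for every B > 0, the L¹ distance satisfies ∫₀¹ |μ(s) − μ^(j)(s)| ds ≤ (2/B)·(∫₀¹ μ(s)² ds) + B·2^{−j}. -/
open MeasureTheory

/-- The dyadic average of `f` at scale `j`: on each dyadic interval
`[(k-1)/2^j, k/2^j)` it equals `2^j` times the integral of `f` over that interval. -/
noncomputable def dyadicAvg (j : ℕ) (f : ℝ → ℝ) (s : ℝ) : ℝ :=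
  (2 : ℝ) ^ j *
    ∫ r in Set.Ico ((⌊(2 : ℝ) ^ j * s⌋ : ℝ) / (2 : ℝ) ^ j)
      (((⌊(2 : ℝ) ^ j * s⌋ : ℝ) + 1) / (2 : ℝ) ^ j), f r

lemma floor_aux (j k : ℕ) (s : ℝ) (h1 : (k : ℝ) / 2 ^ j ≤ s)
    (h2 : s < ((k : ℝ) + 1) / 2 ^ j) : ⌊(2 : ℝ) ^ j * s⌋ = (k : ℤ) := by
  have hp : (0:ℝ) < 2 ^ j := by positivity
  rw [div_le_iff₀ hp] at h1
  rw [lt_div_iff₀ hp] at h2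
  rw [Int.floor_eq_iff]
  constructor
  · push_cast; nlinarith
  · push_cast; nlinarith

lemma dyadicAvg_eq (j k : ℕ) (f : ℝ → ℝ) (s : ℝ) (h1 : (k : ℝ) / 2 ^ j ≤ s)
    (h2 : s < ((k : ℝ) + 1) / 2 ^ j) :
    dyadicAvg j f s
      = (2:ℝ) ^ j * ∫ r in Set.Ico ((k:ℝ) / 2 ^ j) (((k:ℝ) + 1) / 2 ^ j), f r := by
  unfold dyadicAvg
  rw [floor_aux j k s h1 h2]
  norm_num

lemma integral_Ico_sum (j : ℕ) (F : ℝ → ℝ)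
    (hF : ∀ k : ℕ, k < 2 ^ j → IntegrableOn F (Set.Ico ((k:ℝ)/2^j) (((k:ℝ)+1)/2^j))) :
    ∫ s in Set.Ico (0:ℝ) 1, F s
      = ∑ k ∈ Finset.range (2 ^ j), ∫ s in Set.Ico ((k:ℝ)/2^j) (((k:ℝ)+1)/2^j), F s := by
  have hp : (0:ℝ) < 2 ^ j := by positivity
  set a : ℕ → ℝ := fun k => (k:ℝ) / 2 ^ j with ha
  have hmono : ∀ k : ℕ, a k ≤ a (k+1) := by
    intro k
    apply div_le_div_of_nonneg_right ?_ hp.le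
    push_cast; linarith
  have hcast : ∀ k : ℕ, a (k+1) = ((k:ℝ)+1)/2^j := by
    intro k; simp only [ha]; push_cast; ring
  have conv : ∀ (x y : ℝ), x ≤ y → ∫ s in Set.Ico x y, F s = ∫ s in x..y, F s := by
    intro x y hxy
    rw [intervalIntegral.integral_of_le hxy, integral_Ico_eq_integral_Ioo,
      integral_Ioc_eq_integral_Ioo]
  have hint : ∀ k < 2 ^ j, IntervalIntegrable F volume (a k) (a (k+1)) := by
    intro k hk
    rw [intervalIntegrable_iff_integrableOn_Ico_of_le (hmono k)]
    rw [hcast k]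
    exact hF k hk
  have hsum := intervalIntegral.sum_integral_adjacent_intervals (μ := volume) hint
  have h0 : a 0 = 0 := by simp [ha]
  have h1 : a (2 ^ j) = 1 := by
    simp only [ha]; rw [div_eq_one_iff_eq (ne_of_gt hp)]; push_cast; ring
  calc ∫ s in Set.Ico (0:ℝ) 1, F s = ∫ s in (0:ℝ)..1, F s := conv 0 1 zero_le_one
    _ = ∫ s in (a 0)..(a (2^j)), F s := by rw [h0, h1]
    _ = ∑ k ∈ Finset.range (2 ^ j), ∫ s in (a k)..(a (k+1)), F s := hsum.symm
    _ = _ := by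
        apply Finset.sum_congr rfl
        intro k hk
        rw [← conv (a k) (a (k+1)) (hmono k), hcast k]

theorem stmt0 (μ : ℝ → ℝ) (hmono : MonotoneOn μ (Set.Ico 0 1))
    (hnonneg : ∀ s ∈ Set.Ico (0 : ℝ) 1, 0 ≤ μ s)
    (hL2 : IntegrableOn (fun s => μ s ^ 2) (Set.Ico 0 1))
    (j : ℕ) (B : ℝ) (hB : 0 < B) :
    ∫ s in Set.Ico (0 : ℝ) 1, |μ s - dyadicAvg j μ s| ≤
      (2 / B) * (∫ s in Set.Ico (0 : ℝ) 1, μ s ^ 2) + B * ((2 : ℝ) ^ j)⁻¹ := by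
  have hp : (0:ℝ) < (2:ℝ) ^ j := by positivity
  set n : ℕ := 2 ^ j with hn
  have hnpos : 0 < n := Nat.pow_pos (by norm_num)
  set g : ℝ → ℝ := fun s => min (μ s) B with hgdef
  set h : ℝ → ℝ := fun s => μ s - min (μ s) B with hhdef
  set I : ℕ → Set ℝ := fun k => Set.Ico ((k:ℝ)/2^j) (((k:ℝ)+1)/2^j) with hIdef
  have hIsub : ∀ k < n, I k ⊆ Set.Ico (0:ℝ) 1 := by
    intro k hk
    apply Set.Ico_subset_Ico
    · positivity
    · rw [div_le_one hp]
      have : (k:ℝ) + 1 ≤ (n:ℝ) := by exact_mod_cast Nat.succ_le_of_lt hk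
      simpa [hn] using this
  -- measurability / integrability
  have hmeas : AEMeasurable μ (volume.restrict (Set.Ico (0:ℝ) 1)) :=
    aemeasurable_restrict_of_monotoneOn measurableSet_Ico hmono
  have hmem : ∀ᵐ s ∂(volume.restrict (Set.Ico (0:ℝ) 1)), s ∈ Set.Ico (0:ℝ) 1 :=
    ae_restrict_mem measurableSet_Ico
  have hvol : volume (Set.Ico (0:ℝ) 1) < ⊤ := by
    rw [Real.volume_Ico]; exact ENNReal.ofReal_lt_top
  have hIntμ : IntegrableOn μ (Set.Ico 0 1) := by
    apply Integrable.mono' (g := fun s => 1 + μ s ^ 2)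
    · exact (integrableOn_const (ne_of_lt hvol)).add hL2
    · exact hmeas.aestronglyMeasurable
    · filter_upwards [hmem] with s hs
      have := hnonneg s hs
      rw [Real.norm_eq_abs, abs_of_nonneg this]
      nlinarith
  have hIntg : IntegrableOn g (Set.Ico 0 1) := by
    apply Integrable.mono' (g := fun _ => B)
    · exact integrableOn_const (ne_of_lt hvol)
    · exact (hmeas.min aemeasurable_const).aestronglyMeasurable
    · filter_upwards [hmem] with s hs
      have h0 := hnonneg s hs
      rw [Real.norm_eq_abs, abs_of_nonneg (le_min h0 hB.le)]
      exact min_le_right _ _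
  have hInth : IntegrableOn h (Set.Ico 0 1) := hIntμ.sub hIntg
  have hh0 : ∀ s, 0 ≤ h s := by
    intro s; simp only [hhdef, sub_nonneg]; exact min_le_left _ _
  -- the telescoping sequence
  set G : ℕ → ℝ := fun m => if m < n then min (μ ((m:ℝ)/2^j)) B else B with hGdef
  -- volume of each small interval
  have hvolk : ∀ k : ℕ, (volume (I k)).toReal = ((2:ℝ)^j)⁻¹ := by
    intro k
    simp only [hIdef, Real.volume_Ico]
    rw [ENNReal.toReal_ofReal (by rw [sub_nonneg]; apply div_le_div_of_nonneg_right ?_ hp.le; linarith)]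
    field_simp
    ring
  -- dyadicAvg on I k
  have hDk : ∀ k : ℕ, k < n → ∀ s ∈ I k,
      dyadicAvg j μ s = (2:ℝ)^j * ∫ r in I k, μ r := by
    intro k hk s hs
    exact dyadicAvg_eq j k μ s hs.1 hs.2
  have hconst : ∀ (k : ℕ) (C : ℝ), IntegrableOn (fun _ => C) (I k) := by
    intro k C
    refine integrableOn_const (ne_of_lt ?_)
    simp only [hIdef, Real.volume_Ico]; exact ENNReal.ofReal_lt_top
  have hIntF : ∀ k : ℕ, k < n →
      IntegrableOn (fun s => |μ s - dyadicAvg j μ s|) (I k) := by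
    intro k hk
    have hμk : IntegrableOn μ (I k) := hIntμ.mono_set (hIsub k hk)
    apply IntegrableOn.congr_fun
      (f := fun s => |μ s - (2:ℝ)^j * ∫ r in I k, μ r|)
    · exact (hμk.sub (hconst k _)).abs
    · intro s hs
      show |μ s - (2:ℝ)^j * ∫ r in I k, μ r| = |μ s - dyadicAvg j μ s|
      rw [hDk k hk s hs]
    · exact measurableSet_Ico
  -- key per-interval estimate
  have key : ∀ k : ℕ, k < n →
      ∫ s in I k, |μ s - dyadicAvg j μ s|
        ≤ (G (k+1) - G k) * ((2:ℝ)^j)⁻¹ + 2 * ∫ s in I k, h s := by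
    intro k hk
    have hIk := hIsub k hk
    have hμk : IntegrableOn μ (I k) := hIntμ.mono_set hIk
    have hgk : IntegrableOn g (I k) := hIntg.mono_set hIk
    have hhk : IntegrableOn h (I k) := hInth.mono_set hIk
    have hIkmeas : MeasurableSet (I k) := measurableSet_Ico
    set c : ℝ := (2:ℝ)^j * ∫ s in I k, g s with hc
    set d : ℝ := (2:ℝ)^j * ∫ s in I k, h s with hd
    have hlkI : (k:ℝ)/2^j ∈ I k := ⟨le_refl _, by
      rw [div_lt_div_iff₀ hp hp]; nlinarith [hp]⟩
    have hglb : ∀ s ∈ I k, G k ≤ g s := by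
      intro s hs
      have hGk : G k = min (μ ((k:ℝ)/2^j)) B := if_pos hk
      rw [hGk]
      exact min_le_min (hmono (hIk hlkI) (hIk hs) hs.1) le_rfl
    have hgub : ∀ s ∈ I k, g s ≤ G (k+1) := by
      intro s hs
      by_cases hk1 : k + 1 < n
      · have hGk1 : G (k+1) = min (μ (((k:ℝ)+1)/2^j)) B := by
          simp only [hGdef, if_pos hk1]; norm_num
        have hrI : ((k:ℝ)+1)/2^j ∈ Set.Ico (0:ℝ) 1 := by
          constructor
          · positivity
          · rw [div_lt_one hp]
            have : ((k:ℕ):ℝ) + 1 < (n:ℝ) := by exact_mod_cast hk1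
            simpa [hn] using this
        rw [hGk1]
        exact min_le_min (hmono (hIk hs) hrI (le_of_lt hs.2)) le_rfl
      · have : G (k+1) = B := if_neg hk1
        rw [this]
        exact min_le_right _ _
    have hc_lb : G k ≤ c := by
      have h1 : ∫ _s in I k, (G k) ≤ ∫ s in I k, g s :=
        setIntegral_mono_on (hconst k _) hgk hIkmeas hglb
      rw [setIntegral_const, measureReal_def, hvolk k, smul_eq_mul] at h1
      rw [hc]
      calc G k = 2^j * (((2:ℝ)^j)⁻¹ * G k) := by field_simp
        _ ≤ 2^j * ∫ s in I k, g s := mul_le_mul_of_nonneg_left h1 hp.le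
    have hc_ub : c ≤ G (k+1) := by
      have h1 : ∫ s in I k, g s ≤ ∫ _s in I k, (G (k+1)) :=
        setIntegral_mono_on hgk (hconst k _) hIkmeas hgub
      rw [setIntegral_const, measureReal_def, hvolk k, smul_eq_mul] at h1
      rw [hc]
      calc (2:ℝ)^j * ∫ s in I k, g s ≤ 2^j * (((2:ℝ)^j)⁻¹ * G (k+1)) :=
            mul_le_mul_of_nonneg_left h1 hp.le
        _ = G (k+1) := by field_simp
    have hd0 : 0 ≤ d :=
      mul_nonneg hp.le (setIntegral_nonneg hIkmeas fun s _ => hh0 s)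
    have hD : ∀ s ∈ I k, dyadicAvg j μ s = c + d := by
      intro s hs
      rw [hDk k hk s hs]
      have hsplit : ∫ r in I k, μ r = (∫ s in I k, g s) + ∫ s in I k, h s := by
        rw [← integral_add hgk hhk]
        apply setIntegral_congr_fun hIkmeas
        intro s _
        simp only [hgdef, hhdef]
        ring
      rw [hsplit, hc, hd]
      ring
    have hpt : ∀ s ∈ I k, |μ s - dyadicAvg j μ s| ≤ (G (k+1) - G k + d) + h s := by
      intro s hs
      rw [hD s hs]
      have h1 : |g s - c| ≤ G (k+1) - G k :=
        abs_le.mpr ⟨by linarith [hglb s hs, hc_ub], by linarith [hgub s hs, hc_lb]⟩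
      have h2 : |h s - d| ≤ h s + d :=
        abs_le.mpr ⟨by linarith [hh0 s], by linarith [hd0]⟩
      calc |μ s - (c + d)| = |(g s - c) + (h s - d)| := by
            congr 1; simp only [hgdef, hhdef]; ring
        _ ≤ |g s - c| + |h s - d| := abs_add_le _ _
        _ ≤ (G (k+1) - G k) + (h s + d) := add_le_add h1 h2
        _ = (G (k+1) - G k + d) + h s := by ring
    have hmain : ∫ s in I k, |μ s - dyadicAvg j μ s|
        ≤ ∫ s in I k, ((G (k+1) - G k + d) + h s) :=
      setIntegral_mono_on (hIntF k hk) ((hconst k _).add hhk) hIkmeas hpt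
    have hrhs : ∫ s in I k, ((G (k+1) - G k + d) + h s)
        = (G (k+1) - G k) * ((2:ℝ)^j)⁻¹ + 2 * ∫ s in I k, h s := by
      rw [integral_add (hconst k _) hhk, setIntegral_const, measureReal_def, hvolk k, smul_eq_mul, hd]
      field_simp
      ring
    linarith
  -- pointwise bound for h by μ²/B
  have hhle : ∫ s in Set.Ico (0:ℝ) 1, h s
      ≤ (1/B) * ∫ s in Set.Ico (0:ℝ) 1, μ s ^ 2 := by
    have h1 : ∫ s in Set.Ico (0:ℝ) 1, h s
        ≤ ∫ s in Set.Ico (0:ℝ) 1, (μ s ^ 2 * (1/B)) := by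
      apply setIntegral_mono_on hInth (hL2.mul_const (1/B)) measurableSet_Ico
      intro s hs
      have hm := hnonneg s hs
      rcases le_total (μ s) B with hcase | hcase
      · simp only [hhdef, min_eq_left hcase, sub_self]
        positivity
      · simp only [hhdef, min_eq_right hcase]
        rw [mul_one_div, le_div_iff₀ hB]
        nlinarith
    rw [integral_mul_const] at h1
    linarith
  -- assemble
  have hGn : G n = B := if_neg (lt_irrefl n)
  have hG0 : 0 ≤ G 0 := by
    have : G 0 = min (μ ((0:ℝ)/2^j)) B := by
      simp only [hGdef, if_pos hnpos, Nat.cast_zero]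
    rw [this, zero_div]
    exact le_min (hnonneg 0 ⟨le_refl 0, zero_lt_one⟩) hB.le
  calc ∫ s in Set.Ico (0:ℝ) 1, |μ s - dyadicAvg j μ s|
      = ∑ k ∈ Finset.range n, ∫ s in I k, |μ s - dyadicAvg j μ s| :=
        integral_Ico_sum j _ hIntF
    _ ≤ ∑ k ∈ Finset.range n, ((G (k+1) - G k) * ((2:ℝ)^j)⁻¹ + 2 * ∫ s in I k, h s) :=
        Finset.sum_le_sum (fun k hk => key k (Finset.mem_range.mp hk))
    _ = (G n - G 0) * ((2:ℝ)^j)⁻¹ + 2 * ∫ s in Set.Ico (0:ℝ) 1, h s := by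
        rw [Finset.sum_add_distrib, ← Finset.sum_mul, Finset.sum_range_sub,
          ← Finset.mul_sum, ← integral_Ico_sum j h (fun k hk => hInth.mono_set (hIsub k hk))]
    _ ≤ B * ((2:ℝ)^j)⁻¹ + 2 * ((1/B) * ∫ s in Set.Ico (0:ℝ) 1, μ s ^ 2) := by
        have h1 : (G n - G 0) * ((2:ℝ)^j)⁻¹ ≤ B * ((2:ℝ)^j)⁻¹ :=
          mul_le_mul_of_nonneg_right (by rw [hGn]; linarith) (inv_nonneg.mpr hp.le)
        linarith
    _ = (2 / B) * (∫ s in Set.Ico (0:ℝ) 1, μ s ^ 2) + B * ((2:ℝ)^j)⁻¹ := by ring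
end

section
/- Let μ : [0,1) → [0,∞) be nondecreasing and square-integrable, let j ∈ ℕ, and let μ^(j) be the dyadic average of μ at scale j. Then ∫₀¹ |μ(s) − μ^(j)(s)| ds ≤ 2^{(3−j)/2} · (∫₀¹ μ(s)² ds)^{1/2}. -/
open MeasureTheory

/-- Cauchy–Schwarz for set integrals, elementary form. -/
lemma sq_setIntegral_le_aux {f : ℝ → ℝ} {s : Set ℝ}
    (hvol : volume s ≠ ⊤)
    (hf : IntegrableOn f s) (hf2 : IntegrableOn (fun x => f x ^ 2) s) :
    (∫ x in s, f x) ^ 2 ≤ (volume s).toReal * ∫ x in s, f x ^ 2 := by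
  set V := (volume s).toReal with hV
  have hV0 : 0 ≤ V := ENNReal.toReal_nonneg
  rcases eq_or_lt_of_le hV0 with hV1 | hV1
  · have hzero : volume s = 0 := by
      rcases (ENNReal.toReal_eq_zero_iff _).1 hV1.symm with h | h
      · exact h
      · exact absurd h hvol
    have hres : Measure.restrict volume s = 0 := Measure.restrict_eq_zero.2 hzero
    rw [hres]
    simp
  · have hVne : V ≠ 0 := hV1.ne'
    set T := ∫ x in s, f x with hT
    set S := ∫ x in s, f x ^ 2 with hS
    set c := T / V with hc
    have hconst : IntegrableOn (fun _ : ℝ => c ^ 2) s :=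
      integrableOn_const hvol
    have h0 : 0 ≤ ∫ x in s, (f x - c) ^ 2 :=
      integral_nonneg fun x => sq_nonneg _
    have hexp : ∫ x in s, (f x - c) ^ 2 = S - 2 * c * T + c ^ 2 * V := by
      have heq : ∀ x, (f x - c) ^ 2 = f x ^ 2 - (2 * c) * f x + c ^ 2 := by
        intro x; ring
      simp_rw [heq]
      have hint1 : Integrable (fun x => f x ^ 2 - 2 * c * f x) (volume.restrict s) :=
        hf2.sub (hf.const_mul (2 * c))
      rw [integral_add hint1 hconst,
        integral_sub hf2 (hf.const_mul (2 * c)), integral_const_mul, setIntegral_const,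
        smul_eq_mul, measureReal_def]
      ring
    rw [hexp] at h0
    have h1 : 0 ≤ (S - 2 * c * T + c ^ 2 * V) * V := mul_nonneg h0 hV0
    have h2 : (S - 2 * c * T + c ^ 2 * V) * V = (S * V - T ^ 2) * V / V := by
      rw [hc]; field_simp; ring
    rw [h2, mul_div_assoc, div_self hVne, mul_one] at h1
    linarith

theorem stmt1 (μ : ℝ → ℝ) (hmono : MonotoneOn μ (Set.Ico 0 1))
    (hnonneg : ∀ s ∈ Set.Ico (0 : ℝ) 1, 0 ≤ μ s)
    (hL2 : IntegrableOn (fun s => μ s ^ 2) (Set.Ico 0 1))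
    (j : ℕ) :
    ∫ s in Set.Ico (0 : ℝ) 1, |μ s - dyadicAvg j μ s| ≤
      (2 : ℝ) ^ (((3 : ℝ) - j) / 2) * Real.sqrt (∫ s in Set.Ico (0 : ℝ) 1, μ s ^ 2) := by
  have hNpos : (0 : ℝ) < 2 ^ j := by positivity
  set N : ℝ := (2 : ℝ) ^ j with hN
  set h : ℝ := N⁻¹ with hh
  have hhpos : 0 < h := by positivity
  set Q : ℝ := ∫ s in Set.Ico (0 : ℝ) 1, μ s ^ 2 with hQdef
  have hQ0 : 0 ≤ Q := setIntegral_nonneg measurableSet_Ico fun x _ => sq_nonneg _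
  -- the dyadic grid
  set c : ℕ → ℝ := fun k => (k : ℝ) / N with hcdef
  set I : ℕ → Set ℝ := fun k => Set.Ico (c k) (c (k + 1)) with hIdef
  obtain ⟨ℓ, hℓ⟩ : ∃ ℓ, 2 ^ j = ℓ + 1 :=
    ⟨2 ^ j - 1, (Nat.succ_pred_eq_of_pos (pow_pos two_pos j)).symm⟩
  have hcastN : ((2 ^ j : ℕ) : ℝ) = N := by push_cast [hN]; ring
  have hcmono : ∀ {p q : ℕ}, p ≤ q → c p ≤ c q := by
    intro p q hpq
    simp only [hcdef]
    gcongr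
  have hcn : c (2 ^ j) = 1 := by
    show ((2 ^ j : ℕ) : ℝ) / N = 1
    rw [hcastN, div_self hNpos.ne']
  have hsub : ∀ k, k < 2 ^ j → I k ⊆ Set.Ico 0 1 := by
    intro k hk x hx
    constructor
    · exact le_trans (by positivity : (0 : ℝ) ≤ c k) hx.1
    · exact lt_of_lt_of_le hx.2 (le_of_le_of_eq (hcmono hk) hcn)
  have hcdiff : ∀ k : ℕ, c (k + 1) - c k = h := by
    intro k
    show ((k + 1 : ℕ) : ℝ) / N - ((k : ℕ) : ℝ) / N = h
    push_cast
    rw [div_sub_div_same, add_sub_cancel_left, one_div, hh]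
  have hvol : ∀ k, (volume (I k)).toReal = h := by
    intro k
    simp only [hIdef, Real.volume_Ico]
    rw [ENNReal.toReal_ofReal (by rw [hcdiff k]; exact hhpos.le)]
    exact hcdiff k
  have hvolne : ∀ k, volume (I k) ≠ ⊤ := by
    intro k
    rw [hIdef]
    simp [Real.volume_Ico]
  -- integrability of μ
  have hμmeas : AEStronglyMeasurable μ (volume.restrict (Set.Ico (0:ℝ) 1)) :=
    (aemeasurable_restrict_of_monotoneOn measurableSet_Ico hmono).aestronglyMeasurable
  have hμint : IntegrableOn μ (Set.Ico 0 1) := by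
    have hbound : IntegrableOn (fun s : ℝ => 1 + μ s ^ 2) (Set.Ico 0 1) :=
      (integrableOn_const (by simp [Real.volume_Ico])).add hL2
    refine Integrable.mono' hbound hμmeas ?_
    rw [ae_restrict_iff' measurableSet_Ico]
    refine Filter.Eventually.of_forall fun s hs => ?_
    have h1 : 0 ≤ μ s := hnonneg s hs
    rw [Real.norm_eq_abs, abs_of_nonneg h1]
    nlinarith [sq_nonneg (μ s - 1)]
  -- the piecewise value of the dyadic average
  set a : ℕ → ℝ := fun k => N * ∫ r in I k, μ r with hadef
  have hfloor : ∀ k, ∀ s ∈ I k, dyadicAvg j μ s = a k := by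
    intro k s hs
    have h1 : (k : ℝ) ≤ N * s := by
      have := hs.1
      rw [hcdef] at this
      rw [mul_comm]
      exact (div_le_iff₀ hNpos).1 this
    have h2 : N * s < (k : ℝ) + 1 := by
      have := hs.2
      rw [hcdef] at this
      have := (lt_div_iff₀ hNpos).1 this
      push_cast at this ⊢
      linarith [this]
    have hfl : ⌊N * s⌋ = (k : ℤ) := by
      rw [Int.floor_eq_iff]
      · exact ⟨by exact_mod_cast h1, by exact_mod_cast h2⟩
    have hfl' : ((⌊(2:ℝ) ^ j * s⌋ : ℤ) : ℝ) = (k : ℝ) := by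
      rw [← hN, hfl]; simp
    rw [dyadicAvg, hfl', hadef, hIdef, hcdef, ← hN]
    push_cast
    ring_nf
  -- integrand on each piece
  have hIm : ∀ k, MeasurableSet (I k) := fun k => measurableSet_Ico
  have hGint : ∀ k, k < 2 ^ j → IntegrableOn (fun s => |μ s - a k|) (I k) := by
    intro k hk
    exact ((hμint.mono_set (hsub k hk)).sub
      (integrableOn_const (hvolne k))).abs
  have hFint : ∀ k, k < 2 ^ j →
      IntegrableOn (fun s => |μ s - dyadicAvg j μ s|) (I k) := by
    intro k hk
    exact (hGint k hk).congr_fun (fun s hs => by rw [hfloor k s hs]) (hIm k)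
  have hFG : ∀ k, k < 2 ^ j →
      (∫ s in I k, |μ s - dyadicAvg j μ s|) = ∫ s in I k, |μ s - a k| := by
    intro k hk
    exact setIntegral_congr_fun (hIm k) (fun s hs => by rw [hfloor k s hs])
  -- decomposition of the domain
  have hunion : Set.Ico (0:ℝ) 1 = ⋃ k ∈ Finset.range (2 ^ j), I k := by
    ext x
    simp only [Set.mem_iUnion, Finset.mem_range, exists_prop, hIdef, Set.mem_Ico]
    constructor
    · rintro ⟨h0, h1⟩
      have hx0 : (0 : ℝ) ≤ N * x := mul_nonneg hNpos.le h0
      set k : ℕ := (⌊N * x⌋).toNat with hk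
      have hkz : ((k : ℕ) : ℤ) = ⌊N * x⌋ := Int.toNat_of_nonneg (Int.floor_nonneg.2 hx0)
      have hkr : ((k : ℕ) : ℝ) = ((⌊N * x⌋ : ℤ) : ℝ) := by exact_mod_cast hkz
      have hle : (k : ℝ) ≤ N * x := hkr ▸ Int.floor_le (N * x)
      have hlt : N * x < (k : ℝ) + 1 := by
        rw [hkr]; exact Int.lt_floor_add_one (N * x)
      refine ⟨k, ?_, ?_, ?_⟩
      · have : (k : ℝ) < N := lt_of_le_of_lt hle (by nlinarith)
        rw [← hcastN] at this
        exact_mod_cast this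
      · rw [hcdef]
        exact (div_le_iff₀ hNpos).2 (by linarith [hle])
      · rw [hcdef]
        rw [lt_div_iff₀ hNpos]
        push_cast
        nlinarith [hlt]
    · rintro ⟨k, hk, hx1, hx2⟩
      exact hsub k hk ⟨hx1, hx2⟩
  have hdisj : (↑(Finset.range (2 ^ j)) : Set ℕ).Pairwise (Function.onFun Disjoint I) := by
    intro p hp q hq hpq
    have key : ∀ {p q : ℕ}, p < q → Disjoint (I p) (I q) := by
      intro p q hlt
      rw [hIdef, Set.Ico_disjoint_Ico]
      have h1 : c (p + 1) ≤ c q := hcmono hlt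
      simp only [min_le_iff, le_max_iff]
      tauto
    rcases lt_or_gt_of_ne hpq with hlt | hlt
    · exact key hlt
    · exact (key hlt).symm
  -- split the integral
  rw [hunion, integral_biUnion_finset (Finset.range (2 ^ j)) (fun k _ => hIm k)
    hdisj (fun k hk => hFint k (Finset.mem_range.1 hk))]
  have hsum : ∀ k ∈ Finset.range (2 ^ j),
      (∫ s in I k, |μ s - dyadicAvg j μ s|) = ∫ s in I k, |μ s - a k| :=
    fun k hk => hFG k (Finset.mem_range.1 hk)
  rw [Finset.sum_congr rfl hsum]
  -- per-interval bounds
  have hck_mem : ∀ k, k < 2 ^ j → c k ∈ Set.Ico (0:ℝ) 1 := by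
    intro k hk
    refine ⟨by positivity, ?_⟩
    calc c k < c (k + 1) := by
          simp only [hcdef]
          gcongr
          push_cast
          linarith
      _ ≤ 1 := le_of_le_of_eq (hcmono hk) hcn
  -- lower bound for a k
  have halow : ∀ k, k < 2 ^ j → μ (c k) * h ≤ ∫ s in I k, μ s := by
    intro k hk
    have := setIntegral_mono_on (integrableOn_const (hvolne k))
      (hμint.mono_set (hsub k hk)) (hIm k)
      (fun s hs => hmono (hck_mem k hk) (hsub k hk hs) hs.1)
    rwa [setIntegral_const, smul_eq_mul, measureReal_def, hvol k, mul_comm] at this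
  -- upper bound for a k when k+1 < 2^j
  have hahigh : ∀ k, k + 1 < 2 ^ j → (∫ s in I k, μ s) ≤ μ (c (k + 1)) * h := by
    intro k hk
    have := setIntegral_mono_on (hμint.mono_set (hsub k (Nat.lt_of_succ_lt hk)))
      (integrableOn_const (hvolne k)) (hIm k)
      (fun s hs => hmono (hsub k (Nat.lt_of_succ_lt hk) hs) (hck_mem (k + 1) hk) hs.2.le)
    rwa [setIntegral_const, smul_eq_mul, measureReal_def, hvol k, mul_comm] at this
  have haN : ∀ k, a k * h = ∫ s in I k, μ s := by
    intro k
    show (N * ∫ r in I k, μ r) * h = ∫ s in I k, μ s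
    rw [hh, mul_comm N _, mul_assoc, mul_inv_cancel₀ hNpos.ne', mul_one]
  -- bound for non-last intervals
  have hbound1 : ∀ k, k + 1 < 2 ^ j →
      (∫ s in I k, |μ s - a k|) ≤ (μ (c (k + 1)) - μ (c k)) * h := by
    intro k hk
    have hklt : k < 2 ^ j := Nat.lt_of_succ_lt hk
    have hma : μ (c k) ≤ a k := by
      have := halow k hklt
      rw [← haN k] at this
      exact le_of_mul_le_mul_right (by linarith) hhpos
    have haM : a k ≤ μ (c (k + 1)) := by
      have := hahigh k hk
      rw [← haN k] at this
      exact le_of_mul_le_mul_right (by linarith) hhpos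
    have hpt : ∀ s ∈ I k, |μ s - a k| ≤ μ (c (k + 1)) - μ (c k) := by
      intro s hs
      have h1 : μ (c k) ≤ μ s := hmono (hck_mem k hklt) (hsub k hklt hs) hs.1
      have h2 : μ s ≤ μ (c (k + 1)) :=
        hmono (hsub k hklt hs) (hck_mem (k + 1) hk) hs.2.le
      rw [abs_sub_le_iff]
      constructor <;> linarith
    have := setIntegral_mono_on (hGint k hklt)
      (integrableOn_const (hvolne k)) (hIm k) hpt
    rwa [setIntegral_const, smul_eq_mul, measureReal_def, hvol k, mul_comm] at this
  -- bound for the last interval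
  have hℓlt : ℓ < 2 ^ j := by omega
  set T : ℝ := ∫ s in I ℓ, μ s with hTdef
  have hT0 : 0 ≤ T := setIntegral_nonneg (hIm ℓ) fun s hs => hnonneg s (hsub ℓ hℓlt hs)
  have hbound2 : (∫ s in I ℓ, |μ s - a ℓ|) ≤ 2 * T - 2 * μ (c ℓ) * h := by
    have hma : μ (c ℓ) ≤ a ℓ := by
      have := halow ℓ hℓlt
      rw [← haN ℓ] at this
      exact le_of_mul_le_mul_right (by linarith) hhpos
    have hpt : ∀ s ∈ I ℓ, |μ s - a ℓ| ≤ μ s + (a ℓ - 2 * μ (c ℓ)) := by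
      intro s hs
      have h1 : μ (c ℓ) ≤ μ s := hmono (hck_mem ℓ hℓlt) (hsub ℓ hℓlt hs) hs.1
      rw [abs_sub_le_iff]
      constructor <;> linarith
    have hadd : IntegrableOn (fun s => μ s + (a ℓ - 2 * μ (c ℓ))) (I ℓ) :=
      (hμint.mono_set (hsub ℓ hℓlt)).add
        (integrableOn_const (hvolne ℓ))
    have hint := setIntegral_mono_on (hGint ℓ hℓlt) hadd (hIm ℓ) hpt
    rw [integral_add (hμint.mono_set (hsub ℓ hℓlt))
      (integrableOn_const (hvolne ℓ)), setIntegral_const,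
      smul_eq_mul, measureReal_def, hvol ℓ] at hint
    have := haN ℓ
    calc (∫ s in I ℓ, |μ s - a ℓ|) ≤ T + h * (a ℓ - 2 * μ (c ℓ)) := hint
      _ = 2 * T - 2 * μ (c ℓ) * h := by
          linear_combination this
  -- Cauchy–Schwarz on the last interval
  have hQsub : (∫ s in I ℓ, μ s ^ 2) ≤ Q := by
    rw [hQdef]
    exact setIntegral_mono_set hL2 (Filter.Eventually.of_forall fun s => sq_nonneg _)
      (HasSubset.Subset.eventuallyLE (hsub ℓ hℓlt))
  have hQsub0 : 0 ≤ ∫ s in I ℓ, μ s ^ 2 :=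
    setIntegral_nonneg (hIm ℓ) fun s _ => sq_nonneg _
  have hCS : T ≤ Real.sqrt h * Real.sqrt Q := by
    have hcs := sq_setIntegral_le_aux (hvolne ℓ) (hμint.mono_set (hsub ℓ hℓlt))
      (hL2.mono_set (hsub ℓ hℓlt))
    rw [hvol ℓ, ← hTdef] at hcs
    have h1 : T ^ 2 ≤ h * Q := le_trans hcs (by nlinarith [hhpos.le])
    calc T = Real.sqrt (T ^ 2) := (Real.sqrt_sq hT0).symm
      _ ≤ Real.sqrt (h * Q) := Real.sqrt_le_sqrt h1
      _ = Real.sqrt h * Real.sqrt Q := Real.sqrt_mul hhpos.le Q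
  -- telescoping sum
  have htel : ∑ k ∈ Finset.range ℓ, (μ (c (k + 1)) - μ (c k)) * h
      = (μ (c ℓ) - μ (c 0)) * h := by
    rw [← Finset.sum_mul, Finset.sum_range_sub (fun k => μ (c k))]
  have hsum_le : ∑ k ∈ Finset.range (2 ^ j), (∫ s in I k, |μ s - a k|)
      ≤ (μ (c ℓ) - μ (c 0)) * h + (2 * T - 2 * μ (c ℓ) * h) := by
    rw [hℓ, Finset.sum_range_succ]
    refine add_le_add ?_ hbound2
    rw [← htel]
    refine Finset.sum_le_sum fun k hk => ?_
    have hk' : k + 1 < 2 ^ j := by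
      rw [hℓ]; exact Nat.succ_lt_succ (Finset.mem_range.1 hk)
    exact hbound1 k hk'
  have hc0 : 0 ≤ μ (c 0) := hnonneg _ (hck_mem 0 (pow_pos two_pos j))
  have hcℓ : 0 ≤ μ (c ℓ) := hnonneg _ (hck_mem ℓ hℓlt)
  have hmain : ∑ k ∈ Finset.range (2 ^ j), (∫ s in I k, |μ s - a k|)
      ≤ 2 * (Real.sqrt h * Real.sqrt Q) := by
    calc ∑ k ∈ Finset.range (2 ^ j), (∫ s in I k, |μ s - a k|)
        ≤ (μ (c ℓ) - μ (c 0)) * h + (2 * T - 2 * μ (c ℓ) * h) := hsum_le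
      _ ≤ 2 * T := by nlinarith [hhpos.le]
      _ ≤ 2 * (Real.sqrt h * Real.sqrt Q) := by linarith [hCS]
  refine le_trans hmain ?_
  -- final numerical comparison
  have hsqh : Real.sqrt h = (Real.sqrt N)⁻¹ := by
    rw [hh, Real.sqrt_inv]
  have hrs : (2 : ℝ) ^ (((3 : ℝ) - j) / 2) = 2 ^ ((3 : ℝ) / 2) * (Real.sqrt N)⁻¹ := by
    rw [sub_div, Real.rpow_sub (by norm_num : (0:ℝ) < 2)]
    rw [div_eq_mul_inv]
    congr 1
    rw [hN, ← Real.rpow_natCast (2 : ℝ) j, Real.sqrt_eq_rpow, ← Real.rpow_mul (by norm_num),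
      ← Real.rpow_neg (by norm_num), ← Real.rpow_neg (by norm_num)]
    congr 1
    ring
  rw [hrs, hsqh]
  have h32 : (2 : ℝ) ≤ 2 ^ ((3 : ℝ) / 2) := by
    calc (2 : ℝ) = 2 ^ (1 : ℝ) := (Real.rpow_one 2).symm
      _ ≤ 2 ^ ((3 : ℝ) / 2) := by
        apply Real.rpow_le_rpow_left_iff (by norm_num : (1:ℝ) < 2) |>.2
        norm_num
  have hsN0 : 0 ≤ (Real.sqrt N)⁻¹ := by positivity
  have hsQ0 : 0 ≤ Real.sqrt Q := Real.sqrt_nonneg Q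
  calc 2 * ((Real.sqrt N)⁻¹ * Real.sqrt Q) = (2 * (Real.sqrt N)⁻¹) * Real.sqrt Q := by ring
    _ ≤ (2 ^ ((3 : ℝ) / 2) * (Real.sqrt N)⁻¹) * Real.sqrt Q := by
        apply mul_le_mul_of_nonneg_right (mul_le_mul_of_nonneg_right h32 hsN0) hsQ0
    _ = 2 ^ ((3 : ℝ) / 2) * (Real.sqrt N)⁻¹ * Real.sqrt Q := by ring
end
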